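/- Let q be a real number with 0<q<1, let r and f be positive integers, let χ be a Dirichlet character modulo f with values in ℂ, let x>0 be real, let w₁,…,w_r be positive reals, and let s∈ℂ. Then (∏_{j=1}^r w_j)·Σ_{(n₁,…,n_r)∈(ℤ_{≥1})^r} (∏_{k=1}^r χ(n_k))·q^{x+Σ_{m=1}^r w_m n_m}·[x+Σ_{m=1}^r w_m n_m]_q^{-s} = [f]_q^{-s}·Σ_{(a₁,…,a_r)∈{1,…,f}^r} (∏_{k=1}^r χ(a_k))·(∏_{j=1}^r w_j)·Σ_{(k₁,…,k_r)∈ℕ^r} (q^f)^{(x+Σ_{j=1}^r w_j a_j)/f + Σ_{j=1}^r k_j w_j}·[ (x+Σ_{j=1}^r w_j a_j)/f + Σ_{j=1}^r k_j w_j ]_{q^f}^{-s}, all series converging absolutely. (Theorem 3: the two-variable Dirichlet-type multiple Changhee q-L-function decomposes into Barnes-type multiple Changhee q-zeta series with base q^f.) -/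

import Mathlib

open Complex

/-- The `q`-number `[y]_q = (1 - q^y)/(1 - q)`, where `q^y` is the real power. -/
noncomputable def qNum (q y : ℝ) : ℝ := (1 - q ^ y) / (1 - q)

lemma qNum_pos {q : ℝ} (hq0 : 0 < q) (hq1 : q < 1) {t : ℝ} (ht : 0 < t) : 0 < qNum q t := by
  have h1 : q ^ t < 1 := Real.rpow_lt_one hq0.le hq1 ht
  exact div_pos (by linarith) (by linarith)

lemma qNum_le {q : ℝ} (hq0 : 0 < q) (hq1 : q < 1) (t : ℝ) : qNum q t ≤ (1 - q)⁻¹ := by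
  have h0 : (0:ℝ) < q ^ t := Real.rpow_pos_of_pos hq0 t
  have hq : (0:ℝ) < 1 - q := by linarith
  rw [qNum, div_le_iff₀ hq, inv_mul_cancel₀ hq.ne']
  linarith

lemma qNum_mono {q : ℝ} (hq0 : 0 < q) (hq1 : q < 1) {t u : ℝ} (htu : t ≤ u) :
    qNum q t ≤ qNum q u := by
  have : q ^ u ≤ q ^ t := Real.rpow_le_rpow_of_exponent_ge hq0 hq1.le htu
  have hq : (0:ℝ) < 1 - q := by linarith
  unfold qNum
  gcongr <;> linarith

lemma rpow_bound {c1 c2 u : ℝ} (e : ℝ) (h1 : 0 < c1) (hl : c1 ≤ u) (hu : u ≤ c2) :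
    u ^ e ≤ max (c1 ^ e) (c2 ^ e) := by
  rcases le_or_gt 0 e with he | he
  · exact le_max_of_le_right (Real.rpow_le_rpow (h1.le.trans hl) hu he)
  · exact le_max_of_le_left (Real.rpow_le_rpow_of_nonpos h1 hl he.le)

lemma summable_pi_prod : ∀ (r : ℕ) (g : Fin r → ℕ → ℝ), (∀ m n, 0 ≤ g m n) →
    (∀ m, Summable (g m)) → Summable (fun ν : Fin r → ℕ => ∏ m, g m (ν m)) := by
  intro r
  induction r with
  | zero => intro g _ _; exact Summable.of_finite
  | succ n ih =>
    intro g h0 hs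
    have h := (hs 0).mul_of_nonneg (ih (fun m => g m.succ) (fun m k => h0 _ _)
      (fun m => hs _)) (h0 0) (fun p => Finset.prod_nonneg fun m _ => h0 _ _)
    have h2 := (Fin.consEquiv (fun _ : Fin (n+1) => ℕ)).symm.summable_iff.mpr h
    refine h2.congr fun ν => ?_
    simp [Fin.consEquiv, Function.comp, Fin.prod_univ_succ, Fin.tail]

lemma summable_main (q : ℝ) (hq0 : 0 < q) (hq1 : q < 1) {r : ℕ} (x : ℝ) (hx : 0 < x)
    (w : Fin r → ℝ) (hw : ∀ j, 0 < w j) (e : ℝ) :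
    Summable (fun ν : Fin r → ℕ =>
      q ^ (x + ∑ m, w m * (ν m : ℝ)) * qNum q (x + ∑ m, w m * (ν m : ℝ)) ^ e) := by
  set C := max ((qNum q x) ^ e) (((1 - q)⁻¹) ^ e) with hC
  have hbig : Summable (fun ν : Fin r → ℕ => (q ^ x * C) * ∏ m, (q ^ w m) ^ (ν m)) :=
    (summable_pi_prod r (fun m n => (q ^ w m) ^ n)
      (fun m n => pow_nonneg (Real.rpow_pos_of_pos hq0 _).le n)
      (fun m => summable_geometric_of_lt_one (Real.rpow_pos_of_pos hq0 _).le
        (Real.rpow_lt_one hq0.le hq1 (hw m)))).mul_left _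
  refine hbig.of_nonneg_of_le (fun ν => ?_) (fun ν => ?_)
  · have ht : 0 < x + ∑ m, w m * (ν m : ℝ) := by
      have : 0 ≤ ∑ m, w m * (ν m : ℝ) :=
        Finset.sum_nonneg fun m _ => mul_nonneg (hw m).le (Nat.cast_nonneg _)
      linarith
    exact mul_nonneg (Real.rpow_pos_of_pos hq0 _).le (Real.rpow_nonneg (qNum_pos hq0 hq1 ht).le e)
  · have hsum : 0 ≤ ∑ m, w m * (ν m : ℝ) :=
      Finset.sum_nonneg fun m _ => mul_nonneg (hw m).le (Nat.cast_nonneg _)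
    have ht : 0 < x + ∑ m, w m * (ν m : ℝ) := by linarith
    have hqt : q ^ (x + ∑ m, w m * (ν m : ℝ)) = q ^ x * ∏ m, (q ^ w m) ^ (ν m) := by
      rw [Real.rpow_add hq0, Real.rpow_sum_of_pos hq0]
      congr 1
      refine Finset.prod_congr rfl fun m _ => ?_
      rw [Real.rpow_mul hq0.le, Real.rpow_natCast]
    have hbnd : qNum q (x + ∑ m, w m * (ν m : ℝ)) ^ e ≤ C :=
      rpow_bound e (qNum_pos hq0 hq1 hx) (qNum_mono hq0 hq1 (by linarith))
        (qNum_le hq0 hq1 _)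
    calc q ^ (x + ∑ m, w m * (ν m : ℝ)) * qNum q (x + ∑ m, w m * (ν m : ℝ)) ^ e
        ≤ q ^ (x + ∑ m, w m * (ν m : ℝ)) * C :=
          mul_le_mul_of_nonneg_left hbnd (Real.rpow_pos_of_pos hq0 _).le
      _ = q ^ x * C * ∏ m, (q ^ w m) ^ (ν m) := by rw [hqt]; ring

lemma norm_term' {q' t : ℝ} (hq0 : 0 < q') (h1 : q' < 1) (ht : 0 < t) (s : ℂ) :
    ‖((q' ^ t : ℝ) : ℂ) * ((qNum q' t : ℝ) : ℂ) ^ (-s)‖ = q' ^ t * qNum q' t ^ (-s.re) := by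
  have hcp : ‖((qNum q' t : ℝ) : ℂ) ^ (-s)‖ = qNum q' t ^ (-s.re) := by
    rw [norm_cpow_eq_rpow_re_of_pos (qNum_pos hq0 h1 ht),
      Complex.neg_re]
  rw [norm_mul, Complex.norm_real, Real.norm_of_nonneg (Real.rpow_pos_of_pos hq0 t).le, hcp]

lemma key (q : ℝ) (hq0 : 0 < q) (hq1 : q < 1) {r : ℕ} (f : ℕ) (hf : 0 < f)
    (χ : DirichletCharacter ℂ f) (x : ℝ) (hx : 0 < x) (w : Fin r → ℝ) (hw : ∀ j, 0 < w j)
    (s : ℂ) (b : Fin r → Fin f) (κ : Fin r → ℕ) :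
    (∏ k, χ (((κ k * f + (b k : ℕ)) + 1 : ℕ) : ZMod f)) *
        ((q ^ (x + ∑ m, w m * (((κ m * f + (b m : ℕ) : ℕ) : ℝ) + 1)) : ℝ) : ℂ) *
        ((qNum q (x + ∑ m, w m * (((κ m * f + (b m : ℕ) : ℕ) : ℝ) + 1)) : ℝ) : ℂ) ^ (-s)
    = (∏ k, χ ((((b k : ℕ) + 1 : ℕ)) : ZMod f)) * ((qNum q (f : ℝ) : ℝ) : ℂ) ^ (-s) *
      ((((q ^ f) ^ ((x + ∑ j, w j * ((((b j : ℕ) + 1 : ℕ)) : ℝ)) / (f : ℝ)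
            + ∑ j, (κ j : ℝ) * w j) : ℝ) : ℂ) *
        ((qNum (q ^ f) ((x + ∑ j, w j * ((((b j : ℕ) + 1 : ℕ)) : ℝ)) / (f : ℝ)
            + ∑ j, (κ j : ℝ) * w j) : ℝ) : ℂ) ^ (-s)) := by
  have hfR : (0:ℝ) < f := Nat.cast_pos.mpr hf
  set t : ℝ := (x + ∑ j, w j * ((((b j : ℕ) + 1 : ℕ)) : ℝ)) / (f : ℝ) + ∑ j, (κ j : ℝ) * w j
    with ht_def
  have ht : 0 < t := by
    have h1 : 0 < x + ∑ j, w j * ((((b j : ℕ) + 1 : ℕ)) : ℝ) := by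
      have : (0:ℝ) ≤ ∑ j, w j * ((((b j : ℕ) + 1 : ℕ)) : ℝ) :=
        Finset.sum_nonneg fun j _ => mul_nonneg (hw j).le (Nat.cast_nonneg _)
      linarith
    have h2 : (0:ℝ) ≤ ∑ j, (κ j : ℝ) * w j :=
      Finset.sum_nonneg fun j _ => mul_nonneg (Nat.cast_nonneg _) (hw j).le
    positivity
  have hT : x + ∑ m, w m * (((κ m * f + (b m : ℕ) : ℕ) : ℝ) + 1) = (f : ℝ) * t := by
    have hterm : ∀ m : Fin r, w m * (((κ m * f + (b m : ℕ) : ℕ) : ℝ) + 1)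
        = w m * ((((b m : ℕ) + 1 : ℕ)) : ℝ) + (f : ℝ) * ((κ m : ℝ) * w m) := by
      intro m; push_cast; ring
    rw [Finset.sum_congr rfl fun m _ => hterm m, Finset.sum_add_distrib, ← Finset.mul_sum,
      ht_def]
    field_simp
    ring
  have hchi : ∀ k : Fin r, (((κ k * f + (b k : ℕ)) + 1 : ℕ) : ZMod f)
      = ((((b k : ℕ) + 1 : ℕ)) : ZMod f) := by
    intro k; push_cast [ZMod.natCast_self]; ring
  have hpow : q ^ ((f : ℝ) * t) = (q ^ f) ^ t := by
    rw [Real.rpow_mul hq0.le, Real.rpow_natCast]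
  have hqf0 : (0:ℝ) < q ^ f := pow_pos hq0 f
  have hqf1 : q ^ f < 1 := pow_lt_one₀ hq0.le hq1 hf.ne'
  have hd : qNum q ((f : ℝ) * t) = qNum q (f : ℝ) * qNum (q ^ f) t := by
    unfold qNum
    rw [hpow, Real.rpow_natCast]
    have h1 : (1:ℝ) - q ≠ 0 := by linarith
    have h2 : (1:ℝ) - q ^ f ≠ 0 := by linarith
    field_simp
  have hpos1 : 0 < qNum q (f : ℝ) := qNum_pos hq0 hq1 hfR
  have hpos2 : 0 < qNum (q ^ f) t := qNum_pos hqf0 hqf1 ht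
  rw [Finset.prod_congr rfl fun k _ => congrArg χ (hchi k), hT, hd, hpow, ofReal_mul,
    mul_cpow_ofReal_nonneg hpos1.le hpos2.le]
  ring

set_option maxHeartbeats 1600000 in
/-- Theorem 3: the two-variable Dirichlet-type multiple Changhee `q`-`L`-function decomposes into
Barnes-type multiple Changhee `q`-zeta series with base `q^f`. -/
theorem stmt3 (q : ℝ) (hq0 : 0 < q) (hq1 : q < 1) (r f : ℕ) (hr : 0 < r) (hf : 0 < f)
    (χ : DirichletCharacter ℂ f) (x : ℝ) (hx : 0 < x) (w : Fin r → ℝ) (hw : ∀ j, 0 < w j)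
    (s : ℂ) :
    Summable (fun ν : Fin r → ℕ => (∏ k, χ ((ν k + 1 : ℕ) : ZMod f)) *
        ((q ^ (x + ∑ m, w m * ((ν m : ℝ) + 1)) : ℝ) : ℂ) *
        ((qNum q (x + ∑ m, w m * ((ν m : ℝ) + 1)) : ℝ) : ℂ) ^ (-s)) ∧
    (∀ a : Fin r → ℕ, Summable (fun κ : Fin r → ℕ =>
        (((q ^ f) ^ ((x + ∑ j, w j * (a j : ℝ)) / (f : ℝ) + ∑ j, (κ j : ℝ) * w j) : ℝ) : ℂ) *
        ((qNum (q ^ f) ((x + ∑ j, w j * (a j : ℝ)) / (f : ℝ) + ∑ j, (κ j : ℝ) * w j) : ℝ) : ℂ)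
          ^ (-s))) ∧
    (∏ j, ((w j : ℝ) : ℂ)) * ∑' ν : Fin r → ℕ, (∏ k, χ ((ν k + 1 : ℕ) : ZMod f)) *
        ((q ^ (x + ∑ m, w m * ((ν m : ℝ) + 1)) : ℝ) : ℂ) *
        ((qNum q (x + ∑ m, w m * ((ν m : ℝ) + 1)) : ℝ) : ℂ) ^ (-s)
      = ((qNum q (f : ℝ) : ℝ) : ℂ) ^ (-s) *
        ∑ a ∈ Fintype.piFinset (fun _ : Fin r => Finset.Icc 1 f),
          (∏ k, χ ((a k : ℕ) : ZMod f)) * ((∏ j, ((w j : ℝ) : ℂ)) *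
            ∑' κ : Fin r → ℕ,
              (((q ^ f) ^ ((x + ∑ j, w j * (a j : ℝ)) / (f : ℝ) + ∑ j, (κ j : ℝ) * w j) : ℝ) : ℂ) *
              ((qNum (q ^ f) ((x + ∑ j, w j * (a j : ℝ)) / (f : ℝ) + ∑ j, (κ j : ℝ) * w j) : ℝ) : ℂ)
                ^ (-s)) := by
  haveI : NeZero f := ⟨hf.ne'⟩
  have hqf0 : (0:ℝ) < q ^ f := pow_pos hq0 f
  have hqf1 : q ^ f < 1 := pow_lt_one₀ hq0.le hq1 hf.ne'
  -- Part 1 : summability of the LHS series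
  have hsumF : Summable (fun ν : Fin r → ℕ => (∏ k, χ ((ν k + 1 : ℕ) : ZMod f)) *
      ((q ^ (x + ∑ m, w m * ((ν m : ℝ) + 1)) : ℝ) : ℂ) *
      ((qNum q (x + ∑ m, w m * ((ν m : ℝ) + 1)) : ℝ) : ℂ) ^ (-s)) := by
    have hx' : 0 < x + ∑ m, w m := by
      have : (0:ℝ) ≤ ∑ m, w m := Finset.sum_nonneg fun m _ => (hw m).le
      linarith
    apply Summable.of_norm
    refine (summable_main q hq0 hq1 (x + ∑ m, w m) hx' w hw (-s.re)).of_nonneg_of_le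
      (fun ν => norm_nonneg _) (fun ν => ?_)
    have hexp : (x + ∑ m, w m) + ∑ m, w m * (ν m : ℝ) = x + ∑ m, w m * ((ν m : ℝ) + 1) := by
      have hterm : ∀ m : Fin r, w m * ((ν m : ℝ) + 1) = w m * (ν m : ℝ) + w m := fun m => by ring
      rw [Finset.sum_congr rfl fun m _ => hterm m, Finset.sum_add_distrib]
      ring
    rw [hexp]
    have ht : 0 < x + ∑ m, w m * ((ν m : ℝ) + 1) := by
      rw [← hexp]
      have : (0:ℝ) ≤ ∑ m, w m * (ν m : ℝ) :=
        Finset.sum_nonneg fun m _ => mul_nonneg (hw m).le (Nat.cast_nonneg _)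
      linarith
    calc ‖(∏ k, χ ((ν k + 1 : ℕ) : ZMod f)) *
          ((q ^ (x + ∑ m, w m * ((ν m : ℝ) + 1)) : ℝ) : ℂ) *
          ((qNum q (x + ∑ m, w m * ((ν m : ℝ) + 1)) : ℝ) : ℂ) ^ (-s)‖
        = ‖∏ k, χ ((ν k + 1 : ℕ) : ZMod f)‖ *
          ‖((q ^ (x + ∑ m, w m * ((ν m : ℝ) + 1)) : ℝ) : ℂ) *
            ((qNum q (x + ∑ m, w m * ((ν m : ℝ) + 1)) : ℝ) : ℂ) ^ (-s)‖ := by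
          rw [mul_assoc, norm_mul]
      _ ≤ 1 * ‖((q ^ (x + ∑ m, w m * ((ν m : ℝ) + 1)) : ℝ) : ℂ) *
            ((qNum q (x + ∑ m, w m * ((ν m : ℝ) + 1)) : ℝ) : ℂ) ^ (-s)‖ := by
          apply mul_le_mul_of_nonneg_right _ (norm_nonneg _)
          rw [norm_prod]
          exact Finset.prod_le_one (fun k _ => norm_nonneg _)
            (fun k _ => DirichletCharacter.norm_le_one χ _)
      _ = q ^ (x + ∑ m, w m * ((ν m : ℝ) + 1)) *
            qNum q (x + ∑ m, w m * ((ν m : ℝ) + 1)) ^ (-s.re) := by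
          rw [one_mul, norm_term' hq0 hq1 ht]
  -- Part 2 : summability of each RHS series
  have hsumG : ∀ a : Fin r → ℕ, Summable (fun κ : Fin r → ℕ =>
      (((q ^ f) ^ ((x + ∑ j, w j * (a j : ℝ)) / (f : ℝ) + ∑ j, (κ j : ℝ) * w j) : ℝ) : ℂ) *
      ((qNum (q ^ f) ((x + ∑ j, w j * (a j : ℝ)) / (f : ℝ) + ∑ j, (κ j : ℝ) * w j) : ℝ) : ℂ)
        ^ (-s)) := by
    intro a
    have hx' : 0 < (x + ∑ j, w j * (a j : ℝ)) / (f : ℝ) := by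
      have : (0:ℝ) ≤ ∑ j, w j * (a j : ℝ) :=
        Finset.sum_nonneg fun j _ => mul_nonneg (hw j).le (Nat.cast_nonneg _)
      have hfR : (0:ℝ) < f := Nat.cast_pos.mpr hf
      positivity
    apply Summable.of_norm
    have hmain : Summable (fun κ : Fin r → ℕ =>
        (q ^ f) ^ ((x + ∑ j, w j * (a j : ℝ)) / (f : ℝ) + ∑ j, (κ j : ℝ) * w j) *
        qNum (q ^ f) ((x + ∑ j, w j * (a j : ℝ)) / (f : ℝ) + ∑ j, (κ j : ℝ) * w j)
          ^ (-s.re)) := by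
      refine (summable_main (q ^ f) hqf0 hqf1 _ hx' w hw (-s.re)).congr (fun κ => ?_)
      rw [Finset.sum_congr rfl fun j (_ : j ∈ Finset.univ) => mul_comm (w j) ((κ j : ℝ))]
    refine hmain.of_nonneg_of_le (fun κ => norm_nonneg _) (fun κ => ?_)
    have hE : (0:ℝ) < (x + ∑ j, w j * (a j : ℝ)) / (f : ℝ) + ∑ j, (κ j : ℝ) * w j := by
      have : (0:ℝ) ≤ ∑ j, (κ j : ℝ) * w j :=
        Finset.sum_nonneg fun j _ => mul_nonneg (Nat.cast_nonneg _) (hw j).le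
      linarith
    exact le_of_eq (norm_term' hqf0 hqf1 hE s)
  refine ⟨hsumF, hsumG, ?_⟩
  -- Part 3 : the identity
  set e : (Fin r → Fin f) × (Fin r → ℕ) ≃ (Fin r → ℕ) :=
    (((Equiv.piCongrRight fun _ : Fin r => Nat.divModEquiv f).trans
      (Equiv.arrowProdEquivProdArrow (Fin r) (fun _ => ℕ) (fun _ => Fin f))).trans
      (Equiv.prodComm (Fin r → ℕ) (Fin r → Fin f))).symm with he_def
  have he : ∀ (b : Fin r → Fin f) (κ : Fin r → ℕ),
      e (b, κ) = fun m => κ m * f + (b m : ℕ) := fun b κ => rfl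
  rw [← Equiv.tsum_eq e]
  have hsum2 : Summable (fun p : (Fin r → Fin f) × (Fin r → ℕ) =>
      (∏ k, χ ((e p k + 1 : ℕ) : ZMod f)) *
      ((q ^ (x + ∑ m, w m * ((e p m : ℝ) + 1)) : ℝ) : ℂ) *
      ((qNum q (x + ∑ m, w m * ((e p m : ℝ) + 1)) : ℝ) : ℂ) ^ (-s)) :=
    e.summable_iff.mpr hsumF
  rw [hsum2.tsum_prod]
  rw [tsum_fintype]
  have hstep : ∀ b : Fin r → Fin f,
      (∑' κ : Fin r → ℕ, (∏ k, χ (((e (b, κ)) k + 1 : ℕ) : ZMod f)) *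
        ((q ^ (x + ∑ m, w m * (((e (b, κ)) m : ℝ) + 1)) : ℝ) : ℂ) *
        ((qNum q (x + ∑ m, w m * (((e (b, κ)) m : ℝ) + 1)) : ℝ) : ℂ) ^ (-s))
      = (∏ k, χ ((((b k : ℕ) + 1 : ℕ)) : ZMod f)) * ((qNum q (f : ℝ) : ℝ) : ℂ) ^ (-s) *
        ∑' κ : Fin r → ℕ,
          (((q ^ f) ^ ((x + ∑ j, w j * ((((b j : ℕ) + 1 : ℕ)) : ℝ)) / (f : ℝ)
              + ∑ j, (κ j : ℝ) * w j) : ℝ) : ℂ) *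
          ((qNum (q ^ f) ((x + ∑ j, w j * ((((b j : ℕ) + 1 : ℕ)) : ℝ)) / (f : ℝ)
              + ∑ j, (κ j : ℝ) * w j) : ℝ) : ℂ) ^ (-s) := by
    intro b
    rw [← tsum_mul_left]
    refine tsum_congr fun κ => ?_
    rw [he b κ]
    exact key q hq0 hq1 f hf χ x hx w hw s b κ
  calc (∏ j, ((w j : ℝ) : ℂ)) * ∑ b : Fin r → Fin f,
        ∑' κ : Fin r → ℕ, (∏ k, χ (((e (b, κ)) k + 1 : ℕ) : ZMod f)) *
          ((q ^ (x + ∑ m, w m * (((e (b, κ)) m : ℝ) + 1)) : ℝ) : ℂ) *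
          ((qNum q (x + ∑ m, w m * (((e (b, κ)) m : ℝ) + 1)) : ℝ) : ℂ) ^ (-s)
      = ∑ b : Fin r → Fin f, ((qNum q (f : ℝ) : ℝ) : ℂ) ^ (-s) *
          ((∏ k, χ ((((b k : ℕ) + 1 : ℕ)) : ZMod f)) * ((∏ j, ((w j : ℝ) : ℂ)) *
          ∑' κ : Fin r → ℕ,
            (((q ^ f) ^ ((x + ∑ j, w j * ((((b j : ℕ) + 1 : ℕ)) : ℝ)) / (f : ℝ)
                + ∑ j, (κ j : ℝ) * w j) : ℝ) : ℂ) *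
            ((qNum (q ^ f) ((x + ∑ j, w j * ((((b j : ℕ) + 1 : ℕ)) : ℝ)) / (f : ℝ)
                + ∑ j, (κ j : ℝ) * w j) : ℝ) : ℂ) ^ (-s))) := by
        rw [Finset.mul_sum]
        refine Finset.sum_congr rfl fun b _ => ?_
        rw [hstep b]
        ring
    _ = ((qNum q (f : ℝ) : ℝ) : ℂ) ^ (-s) *
        ∑ a ∈ Fintype.piFinset (fun _ : Fin r => Finset.Icc 1 f),
          (∏ k, χ ((a k : ℕ) : ZMod f)) * ((∏ j, ((w j : ℝ) : ℂ)) *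
            ∑' κ : Fin r → ℕ,
              (((q ^ f) ^ ((x + ∑ j, w j * (a j : ℝ)) / (f : ℝ) + ∑ j, (κ j : ℝ) * w j) : ℝ) : ℂ) *
              ((qNum (q ^ f) ((x + ∑ j, w j * (a j : ℝ)) / (f : ℝ) + ∑ j, (κ j : ℝ) * w j) : ℝ) : ℂ)
                ^ (-s)) := by
        rw [Finset.mul_sum]
        refine Finset.sum_nbij' (i := fun b => fun j => (b j : ℕ) + 1)
          (j := fun a => fun j => (⟨(a j - 1) % f, Nat.mod_lt _ hf⟩ : Fin f)) ?_ ?_ ?_ ?_ ?_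
        · intro b _
          simp only [Fintype.mem_piFinset, Finset.mem_Icc]
          exact fun j => ⟨Nat.succ_le_succ (Nat.zero_le _), Nat.succ_le_of_lt (b j).is_lt⟩
        · intro a _; exact Finset.mem_univ _
        · intro b _
          funext j
          apply Fin.ext
          simp [Nat.mod_eq_of_lt (b j).is_lt]
        · intro a ha
          simp only [Fintype.mem_piFinset, Finset.mem_Icc] at ha
          funext j
          have h1 := ha j
          have h2 : (a j - 1) % f = a j - 1 := Nat.mod_eq_of_lt (by omega)
          simp only [h2]
          omega
        · intro b _
          rfl
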